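/- Every group homomorphism from $SL_2(\mathbb{Z}/5)$ to $GL_2(\mathbb{Z}_2)$, the group of invertible $2 \times 2$ matrices over the ring of $2$-adic integers, is trivial. -/

import Mathlib

open Matrix

/-! Auxiliary: 2-adic side -/

private lemma unit_of_toZMod_ne_zero' (x : ℤ_[2]) (h : PadicInt.toZMod x ≠ 0) : IsUnit x := by
  rw [← IsLocalRing.notMem_maximalIdeal, ← PadicInt.ker_toZMod, RingHom.mem_ker]
  exact h

private lemma matrix_fifth_root' (A : Matrix (Fin 2) (Fin 2) ℤ_[2])
    (hA : A ^ 5 = 1) (hdvd : ∀ i j, (2 : ℤ_[2]) ∣ (A - 1) i j) : A = 1 := by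
  choose B hB using fun i j => hdvd i j
  set Bm : Matrix (Fin 2) (Fin 2) ℤ_[2] := Matrix.of B with hBm
  have hAeq : A = 1 + 2 * Bm := by
    ext i j
    have h1 := hB i j
    simp only [Matrix.sub_apply] at h1
    have h2 : ((1 + 2 * Bm : Matrix (Fin 2) (Fin 2) ℤ_[2])) i j
        = (1 : Matrix (Fin 2) (Fin 2) ℤ_[2]) i j + (Bm i j + Bm i j) := by
      rw [two_mul, Matrix.add_apply, Matrix.add_apply]
    rw [h2]
    simp only [hBm, Matrix.of_apply]
    linear_combination h1
  set U : Matrix (Fin 2) (Fin 2) ℤ_[2] :=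
    5 + 20 * Bm + 40 * Bm ^ 2 + 40 * Bm ^ 3 + 16 * Bm ^ 4 with hU
  have hmain : 2 * (Bm * U) = 0 := by
    have h3 : 2 * (Bm * U) = (1 + 2 * Bm) ^ 5 - 1 := by rw [hU]; noncomm_ring
    rw [h3, ← hAeq, hA, sub_self]
  have hUres : (PadicInt.toZMod (p := 2)).mapMatrix U = 1 := by
    rw [hU]
    simp only [map_add, _root_.map_mul, map_pow, map_ofNat]
    have h20 : (20 : Matrix (Fin 2) (Fin 2) (ZMod 2)) = 0 := by decide
    have h40 : (40 : Matrix (Fin 2) (Fin 2) (ZMod 2)) = 0 := by decide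
    have h16 : (16 : Matrix (Fin 2) (Fin 2) (ZMod 2)) = 0 := by decide
    have h5 : (5 : Matrix (Fin 2) (Fin 2) (ZMod 2)) = 1 := by decide
    rw [h20, h40, h16, h5]
    simp
  have hdet : IsUnit U.det := by
    apply unit_of_toZMod_ne_zero'
    have : ((PadicInt.toZMod (p := 2)).mapMatrix U).det = PadicInt.toZMod U.det :=
      (RingHom.map_det _ _).symm
    rw [hUres] at this
    simp at this
    rw [← this]
    exact one_ne_zero
  have hUnit : IsUnit U := (Matrix.isUnit_iff_isUnit_det U).mpr hdet
  have hBU : Bm * U = 0 := by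
    ext i j
    have h4 : ((2 * (Bm * U) : Matrix (Fin 2) (Fin 2) ℤ_[2])) i j
        = (Bm * U) i j + (Bm * U) i j := by
      rw [two_mul, Matrix.add_apply]
    rw [hmain] at h4
    have h5 : (2 : ℤ_[2]) * (Bm * U) i j = 0 := by
      rw [two_mul]; exact h4.symm
    rcases mul_eq_zero.mp h5 with h | h
    · exact absurd h two_ne_zero
    · simpa using h
  obtain ⟨u, hu⟩ := hUnit
  have hB0 : Bm = 0 := by
    have h6 : Bm * (U * (↑u⁻¹ : Matrix (Fin 2) (Fin 2) ℤ_[2])) = Bm := by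
      rw [← hu, Units.mul_inv, mul_one]
    rw [← h6, ← mul_assoc, hBU, zero_mul]
  rw [hAeq, hB0, mul_zero, add_zero]

private lemma GL2ZMod2_fifth' (u : GL (Fin 2) (ZMod 2)) (h : u ^ 5 = 1) : u = 1 := by
  revert h; revert u; decide

private lemma GL2_Zp2_fifth' (g : GL (Fin 2) ℤ_[2]) (h : g ^ 5 = 1) : g = 1 := by
  set r : GL (Fin 2) ℤ_[2] →* GL (Fin 2) (ZMod 2) :=
    Units.map ((PadicInt.toZMod (p := 2)).mapMatrix.toMonoidHom) with hr
  have hres : r g = 1 := by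
    apply GL2ZMod2_fifth'
    rw [← map_pow, h, _root_.map_one]
  have hmat : ((g : Matrix (Fin 2) (Fin 2) ℤ_[2])).map (PadicInt.toZMod (p := 2)) = 1 := by
    have := congrArg (Units.val) hres
    simpa [hr, Units.coe_map, RingHom.mapMatrix_apply] using this
  have hdvd : ∀ i j, (2 : ℤ_[2]) ∣ ((g : Matrix (Fin 2) (Fin 2) ℤ_[2]) - 1) i j := by
    intro i j
    have h1 : PadicInt.toZMod (((g : Matrix (Fin 2) (Fin 2) ℤ_[2]) - 1) i j) = 0 := by
      have h2 := congrFun (congrFun hmat i) j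
      simp only [Matrix.map_apply] at h2
      simp only [Matrix.sub_apply, map_sub, h2]
      rcases eq_or_ne i j with rfl | hij
      · simp [Matrix.one_apply]
      · simp [Matrix.one_apply, hij]
    rw [← Ideal.mem_span_singleton]
    have : Ideal.span {(2 : ℤ_[2])} = IsLocalRing.maximalIdeal ℤ_[2] := by
      rw [PadicInt.maximalIdeal_eq_span_p]; norm_num
    rw [this, ← PadicInt.ker_toZMod, RingHom.mem_ker]
    exact h1
  have hA : (g : Matrix (Fin 2) (Fin 2) ℤ_[2]) ^ 5 = 1 := by
    have := congrArg (Units.val) h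
    simpa using this
  ext1
  simpa using matrix_fifth_root' _ hA hdvd

/-! Auxiliary: generation of `SL₂(ℤ/5)` by transvections of order 5 -/

private instance fact_prime_five : Fact (Nat.Prime 5) := ⟨by norm_num⟩

private abbrev SL5' := Matrix.SpecialLinearGroup (Fin 2) (ZMod 5)

private def Tm' (a : ZMod 5) : SL5' := ⟨!![1, a; 0, 1], by simp [Matrix.det_fin_two]⟩
private def Lm' (a : ZMod 5) : SL5' := ⟨!![1, 0; a, 1], by simp [Matrix.det_fin_two]⟩

private lemma Tm'_mul (a b : ZMod 5) : Tm' a * Tm' b = Tm' (a + b) := by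
  ext i j
  rw [Matrix.SpecialLinearGroup.coe_mul]
  simp [Tm', Matrix.SpecialLinearGroup.coe_mul, Matrix.mul_fin_two]
  fin_cases i <;> fin_cases j <;> simp <;> ring

private lemma Lm'_mul (a b : ZMod 5) : Lm' a * Lm' b = Lm' (a + b) := by
  ext i j
  rw [Matrix.SpecialLinearGroup.coe_mul]
  simp [Lm', Matrix.SpecialLinearGroup.coe_mul, Matrix.mul_fin_two]

private lemma Tm'_zero : Tm' 0 = 1 := by
  ext i j; simp [Tm']; fin_cases i <;> fin_cases j <;> simp [Matrix.one_fin_two]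

private lemma Lm'_zero : Lm' 0 = 1 := by
  ext i j; simp [Lm']; fin_cases i <;> fin_cases j <;> simp [Matrix.one_fin_two]

private lemma Tm'_pow5 (a : ZMod 5) : Tm' a ^ 5 = 1 := by
  have h : Tm' a ^ 5 = Tm' (a + a + a + a + a) := by
    rw [pow_succ, pow_succ, pow_succ, pow_succ, pow_one, Tm'_mul, Tm'_mul, Tm'_mul, Tm'_mul]
  rw [h]
  have h5 : a + a + a + a + a = 0 := by
    have h6 : a + a + a + a + a = 5 * a := by ring
    rw [h6]
    have h7 : (5 : ZMod 5) = 0 := by decide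
    rw [h7, zero_mul]
  rw [h5, Tm'_zero]

private lemma Lm'_pow5 (a : ZMod 5) : Lm' a ^ 5 = 1 := by
  have h : Lm' a ^ 5 = Lm' (a + a + a + a + a) := by
    rw [pow_succ, pow_succ, pow_succ, pow_succ, pow_one, Lm'_mul, Lm'_mul, Lm'_mul, Lm'_mul]
  rw [h]
  have h5 : a + a + a + a + a = 0 := by
    have h6 : a + a + a + a + a = 5 * a := by ring
    rw [h6]
    have h7 : (5 : ZMod 5) = 0 := by decide
    rw [h7, zero_mul]
  rw [h5, Lm'_zero]

private lemma decomp' (A : SL5') : ∃ x y z w : ZMod 5, A = Tm' x * Lm' y * Tm' z * Lm' w := by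
  obtain ⟨M, hM⟩ := A
  set a := M 0 0 with ha
  set b := M 0 1 with hb
  set c := M 1 0 with hc0
  set d := M 1 1 with hd
  have hdet : a * d - b * c = 1 := by rw [← Matrix.det_fin_two M]; exact hM
  have hMeta : M = !![a, b; c, d] := Matrix.eta_fin_two M
  by_cases hc : c ≠ 0
  · refine ⟨(a - 1) / c, c, (d - 1) / c, 0, ?_⟩
    apply Subtype.ext
    show M = _
    rw [hMeta]
    show _ = (Tm' ((a-1)/c) * Lm' c * Tm' ((d-1)/c) * Lm' 0 : SL5').1
    rw [Matrix.SpecialLinearGroup.coe_mul, Matrix.SpecialLinearGroup.coe_mul,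
      Matrix.SpecialLinearGroup.coe_mul]
    simp only [Tm', Lm', Matrix.SpecialLinearGroup.coe_mul, Matrix.mul_fin_two]
    ext i j
    fin_cases i <;> fin_cases j <;>
      simp <;> field_simp <;> ring_nf <;>
      first
        | linear_combination hdet
        | linear_combination -hdet
        | linear_combination (2 : ZMod 5) * hdet
        | linear_combination (-2 : ZMod 5) * hdet
  · push_neg at hc
    have had : a * d = 1 := by rw [← hdet, hc]; ring
    have hd0 : d ≠ 0 := by
      intro h; rw [h, mul_zero] at had; exact zero_ne_one had
    refine ⟨(a + b - 1) / d, d, (d - 1) / d, -1, ?_⟩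
    apply Subtype.ext
    show M = _
    rw [hMeta, hc]
    show _ = (Tm' ((a+b-1)/d) * Lm' d * Tm' ((d-1)/d) * Lm' (-1) : SL5').1
    rw [Matrix.SpecialLinearGroup.coe_mul, Matrix.SpecialLinearGroup.coe_mul,
      Matrix.SpecialLinearGroup.coe_mul]
    simp only [Tm', Lm', Matrix.SpecialLinearGroup.coe_mul, Matrix.mul_fin_two]
    ext i j
    fin_cases i <;> fin_cases j <;>
      simp <;> field_simp <;> ring_nf <;>
      first
        | linear_combination had
        | linear_combination -had
        | linear_combination (2 : ZMod 5) * had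
        | linear_combination (-2 : ZMod 5) * had

/-- Every group homomorphism from `SL₂(ℤ/5)` to `GL₂(ℤ₂)`, the group of
invertible `2 × 2` matrices over the `2`-adic integers, is trivial. -/
theorem SL2_ZMod5_hom_to_GL2_Zp2_trivial
    (f : Matrix.SpecialLinearGroup (Fin 2) (ZMod 5) →*
      Matrix.GeneralLinearGroup (Fin 2) ℤ_[2]) : f = 1 := by
  have key : ∀ g : SL5', g ^ 5 = 1 → f g = 1 := by
    intro g hg
    apply GL2_Zp2_fifth'
    rw [← map_pow, hg, _root_.map_one]
  have hT : ∀ a, f (Tm' a) = 1 := fun a => key _ (Tm'_pow5 a)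
  have hL : ∀ a, f (Lm' a) = 1 := fun a => key _ (Lm'_pow5 a)
  ext A
  obtain ⟨x, y, z, w, rfl⟩ := decomp' A
  simp [_root_.map_mul, hT, hL]
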